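/- Uniform consistency implies conditional coverage consistency: Suppose for every ε, δ > 0 there exists B₀ such that for all B ≥ B₀, with probability at least 1 - δ, sup_{t∈ℝ, θ'∈Θ} |Ĥ_B(t|θ') - H(t|θ')| ≤ ε, where Ĥ_B is constant on the partition element A(θ) and the cutoff Ĉ_{θ,B} satisfies Ĥ_B(Ĉ_{θ,B}|θ) = α exactly, and suppose the partition element containing θ has probability at least γ/B with γ > 0. Then for every θ with H(·|θ) continuous, lim_{B→∞} P(θ ∈ R̂_B(X) | θ) = 1 - α, where R̂_B(X) = {θ : τ(X,θ) ≥ Ĉ_{θ,B}}. -/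

import Mathlib

open MeasureTheory Filter Set ProbabilityTheory

/-- Uniform consistency implies conditional coverage consistency.  Fix `θ₀` with
continuous true conditional CDF `H = H(·|θ₀)` of the statistic `τ(X,θ₀)` under
the model at `θ₀`.  Suppose the estimator `Ĥ_B(·|·)` is constant on the
partition element `A ∋ θ₀`, the cutoff satisfies `Ĥ_B(Ĉ_{θ₀,B}|θ₀) = α` exactly,
the estimator is uniformly consistent in probability (over all `t` and `θ'`),
the partition element has reference probability at least `γ/B`, and the cutoff is
independent of the fresh test statistic.  Then
`lim_{B→∞} P(θ₀ ∈ R̂_B(X) | θ₀) = 1 - α`, i.e. the coverage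
`P(τ(X,θ₀) ≥ Ĉ_{θ₀,B})` tends to `1 - α`. -/
theorem uniform_consistency_implies_conditional_coverage
    {Ω ΘT : Type*} [MeasurableSpace Ω] [MeasurableSpace ΘT]
    (P : Measure Ω) [IsProbabilityMeasure P]
    (α : ℝ) (hα : α ∈ Set.Ioo (0 : ℝ) 1)
    (θ0 : ΘT) (A : Set ΘT) (hθ0 : θ0 ∈ A)
    (Htrue : ΘT → ℝ → ℝ) (hHcont : Continuous (Htrue θ0))
    (τX : Ω → ℝ) (hτX : Measurable τX)
    (hCDF : ∀ t, Htrue θ0 t = (P {ω | τX ω ≤ t}).toReal)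
    (Hhat : ℕ → Ω → ΘT → ℝ → ℝ)
    (hconst : ∀ B ω θ', θ' ∈ A → Hhat B ω θ' = Hhat B ω θ0)
    (huniform : ∀ ε > (0 : ℝ), ∀ δ > (0 : ℝ), ∃ B0 : ℕ, ∀ B ≥ B0,
      1 - δ ≤ (P {ω | ∀ (t : ℝ) (θ' : ΘT), |Hhat B ω θ' t - Htrue θ' t| ≤ ε}).toReal)
    (C : ℕ → Ω → ℝ) (hCmeas : ∀ B, Measurable (C B))
    (hC : ∀ B ω, Hhat B ω θ0 (C B ω) = α)
    (γ : ℝ) (hγ : 0 < γ)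
    (r : Measure ΘT) [IsProbabilityMeasure r]
    (hAmeas : MeasurableSet A) (hAr : ∀ B : ℕ, γ / B ≤ (r A).toReal)
    (hindep : ∀ B, IndepFun (C B) τX P) :
    Tendsto (fun B => (P {ω | C B ω ≤ τX ω}).toReal) atTop (nhds (1 - α)) := by
  obtain ⟨hα0, hα1⟩ := hα
  -- monotone
  have hmono : Monotone (Htrue θ0) := by
    intro s t hst
    rw [hCDF, hCDF]
    exact ENNReal.toReal_mono (measure_ne_top P _)
      (measure_mono (fun ω (h : τX ω ≤ s) => le_trans h hst))
  -- H equals the cdf of the pushforward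
  have hmap : IsProbabilityMeasure (P.map τX) := Measure.isProbabilityMeasure_map hτX.aemeasurable
  have hcdf : ∀ t, Htrue θ0 t = cdf (P.map τX) t := by
    intro t
    rw [cdf_eq_real, measureReal_def, Measure.map_apply hτX measurableSet_Iic, hCDF]
    rfl
  have htop : Tendsto (Htrue θ0) atTop (nhds 1) := by
    have := tendsto_cdf_atTop (P.map τX)
    exact this.congr (fun t => (hcdf t).symm)
  have hbot : Tendsto (Htrue θ0) atBot (nhds 0) := by
    have := tendsto_cdf_atBot (P.map τX)
    exact this.congr (fun t => (hcdf t).symm)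
  -- probability of strict upper tail
  have htail : ∀ t : ℝ, (P {ω | t < τX ω}).toReal = 1 - Htrue θ0 t := by
    intro t
    have hms : MeasurableSet {ω | τX ω ≤ t} := hτX measurableSet_Iic
    have hcompl : {ω | t < τX ω} = {ω | τX ω ≤ t}ᶜ := by
      ext ω; simp [not_le]
    rw [hcompl, measure_compl hms (measure_ne_top P _), measure_univ,
      ENNReal.toReal_sub_of_le prob_le_one ENNReal.one_ne_top, ENNReal.toReal_one, hCDF]
  rw [Metric.tendsto_atTop]
  intro ε hε
  -- choose ε' and δ
  set ε' : ℝ := min (ε / 8) (min (α / 4) ((1 - α) / 4)) with hε'def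
  have hε'pos : 0 < ε' := by
    apply lt_min (by linarith) (lt_min (by linarith) (by linarith))
  have hε'ε : ε' ≤ ε / 8 := min_le_left _ _
  have hε'α : ε' ≤ α / 4 := le_trans (min_le_right _ _) (min_le_left _ _)
  have hε'α' : ε' ≤ (1 - α) / 4 := le_trans (min_le_right _ _) (min_le_right _ _)
  have hlow : 0 < α - 2 * ε' := by linarith
  have hhigh : α + 2 * ε' < 1 := by linarith
  -- quantiles
  obtain ⟨a₀, ha₀⟩ := (hbot.eventually (gt_mem_nhds hlow)).exists
  obtain ⟨b₀, hb₀⟩ := (htop.eventually (lt_mem_nhds (show α + 2 * ε' < 1 from hhigh))).exists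
  set a : ℝ := min a₀ b₀
  set b : ℝ := max a₀ b₀
  have hHa : Htrue θ0 a < α - 2 * ε' := lt_of_le_of_lt (hmono (min_le_left _ _)) ha₀
  have hHb : α + 2 * ε' < Htrue θ0 b := lt_of_lt_of_le hb₀ (hmono (le_max_right _ _))
  have hivt := intermediate_value_Icc (min_le_max (a := a₀) (b := b₀)) hHcont.continuousOn
  obtain ⟨t₁, _, ht₁⟩ := hivt ⟨le_of_lt hHa, by linarith⟩
  obtain ⟨t₂, _, ht₂⟩ := hivt ⟨by linarith, le_of_lt hHb⟩
  have ht₁' : Htrue θ0 t₁ = α - 2 * ε' := ht₁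
  have ht₂' : Htrue θ0 t₂ = α + 2 * ε' := ht₂
  -- uniform consistency
  obtain ⟨B0, hB0⟩ := huniform ε' hε'pos (ε / 8) (by linarith)
  refine ⟨B0, fun B hB => ?_⟩
  have hG := hB0 B hB
  set G : Set Ω := {ω | ∀ (t : ℝ) (θ' : ΘT), |Hhat B ω θ' t - Htrue θ' t| ≤ ε'} with hGdef
  set E : Set Ω := (C B) ⁻¹' (Ioo t₁ t₂) with hEdef
  have hEmeas : MeasurableSet E := (hCmeas B) measurableSet_Ioo
  have hGE : G ⊆ E := by
    intro ω hω
    have h1 : |Hhat B ω θ0 (C B ω) - Htrue θ0 (C B ω)| ≤ ε' := hω (C B ω) θ0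
    rw [hC B ω] at h1
    have h2 : α - ε' ≤ Htrue θ0 (C B ω) := by
      have := abs_le.mp h1
      linarith [this.1, this.2]
    have h3 : Htrue θ0 (C B ω) ≤ α + ε' := by
      have := abs_le.mp h1
      linarith [this.1, this.2]
    constructor
    · by_contra hcon
      push_neg at hcon
      have := hmono hcon
      rw [ht₁'] at this
      linarith
    · by_contra hcon
      push_neg at hcon
      have := hmono hcon
      rw [ht₂'] at this
      linarith
  -- P E ≥ 1 - ε/8, so P Eᶜ ≤ ε/8
  have hPE : 1 - ε / 8 ≤ (P E).toReal :=
    le_trans hG (ENNReal.toReal_mono (measure_ne_top P _) (measure_mono hGE))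
  have hPEc : (P Eᶜ).toReal ≤ ε / 8 := by
    rw [measure_compl hEmeas (measure_ne_top P _), measure_univ,
      ENNReal.toReal_sub_of_le prob_le_one ENNReal.one_ne_top, ENNReal.toReal_one]
    linarith
  set p : ℝ := (P {ω | C B ω ≤ τX ω}).toReal with hpdef
  -- upper bound
  have hupper : p ≤ 1 - α + 2 * ε' + ε / 8 := by
    have hsub : {ω | C B ω ≤ τX ω} ⊆ {ω | t₁ < τX ω} ∪ Eᶜ := by
      intro ω hω
      by_cases hE : ω ∈ E
      · exact Or.inl (lt_of_lt_of_le hE.1 hω)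
      · exact Or.inr hE
    have h1 : P {ω | C B ω ≤ τX ω} ≤ P {ω | t₁ < τX ω} + P Eᶜ :=
      le_trans (measure_mono hsub) (measure_union_le _ _)
    have h2 : p ≤ (P {ω | t₁ < τX ω}).toReal + (P Eᶜ).toReal := by
      rw [hpdef, ← ENNReal.toReal_add (measure_ne_top P _) (measure_ne_top P _)]
      exact ENNReal.toReal_mono (by finiteness) h1
    rw [htail t₁, ht₁'] at h2
    linarith
  -- lower bound
  have hlower : 1 - α - 2 * ε' - ε / 8 ≤ p := by
    have hsub : {ω | t₂ < τX ω} ⊆ {ω | C B ω ≤ τX ω} ∪ Eᶜ := by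
      intro ω hω
      by_cases hE : ω ∈ E
      · exact Or.inl (le_of_lt (lt_trans hE.2 hω))
      · exact Or.inr hE
    have h1 : P {ω | t₂ < τX ω} ≤ P {ω | C B ω ≤ τX ω} + P Eᶜ :=
      le_trans (measure_mono hsub) (measure_union_le _ _)
    have h2 : (P {ω | t₂ < τX ω}).toReal ≤ p + (P Eᶜ).toReal := by
      rw [hpdef, ← ENNReal.toReal_add (measure_ne_top P _) (measure_ne_top P _)]
      exact ENNReal.toReal_mono (by finiteness) h1
    rw [htail t₂, ht₂'] at h2
    linarith
  rw [Real.dist_eq, abs_lt]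
  constructor <;> linarith
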